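/- Fix integers C and k with 1 ≤ k and k + 1 ≤ C. There exist an initial matrix F^{(0)} ∈ ℝ^{C×C} and a step size η > 0 such that the gradient-descent sequence defined by F^{(m+1)} = F^{(m)} − η·∇R_hard(F^{(m)}) satisfies F^{(m)}_{i,i} → +∞ as m → ∞ for every i, and F^{(m)}_{i,j} → −∞ as m → ∞ for every pair i ≠ j. -/

import Mathlib

open Real Filter

/-- softmax of a vector `v ∈ ℝ^d`: `softmax v j = exp (v j) / ∑ m, exp (v m)`. -/
noncomputable def softmax {d : ℕ} (v : Fin d → ℝ) : Fin d → ℝ :=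
  fun j => Real.exp (v j) / ∑ m, Real.exp (v m)

/-- The hard OKO risk. -/
noncomputable def Rhard {C : ℕ} (k : ℕ) (F : Fin C → Fin C → ℝ) : ℝ :=
  -∑ i : Fin C,
    ∑ S ∈ Finset.univ.filter (fun S : Finset (Fin C) => S.card = k ∧ i ∉ S),
      Real.log (softmax (fun j => 2 * F i j + ∑ ℓ ∈ S, F ℓ j) i)

/-- The `(i,j)` entry of the Euclidean gradient of `Rhard`, i.e. the partial derivative
of `Rhard` with respect to the entry `F_{i,j}`, evaluated at `F`. -/
noncomputable def RhardGrad {C : ℕ} (k : ℕ) (i j : Fin C)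
    (F : Fin C → Fin C → ℝ) : ℝ :=
  deriv (fun t : ℝ => Rhard k (fun a b => if a = i ∧ b = j then t else F a b)) (F i j)

open Finset

lemma hasDerivAt_logsoftmax {C : ℕ} (g : Fin C → ℝ → ℝ) (g' : Fin C → ℝ) (t₀ : ℝ)
    (hg : ∀ b, HasDerivAt (fun t => g b t) (g' b) t₀) (i : Fin C) :
    HasDerivAt (fun t => Real.log (softmax (fun b => g b t) i))
      (g' i - (∑ m, Real.exp (g m t₀) * g' m) / (∑ m, Real.exp (g m t₀))) t₀ := by
  have hpos : ∀ t : ℝ, (0:ℝ) < ∑ m, Real.exp (g m t) := by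
    intro t
    have : Nonempty (Fin C) := ⟨i⟩
    exact Finset.sum_pos (fun m _ => Real.exp_pos _) Finset.univ_nonempty
  have heq : (fun t => Real.log (softmax (fun b => g b t) i))
      = fun t => g i t - Real.log (∑ m, Real.exp (g m t)) := by
    funext t
    rw [softmax, Real.log_div (Real.exp_ne_zero _) (hpos t).ne', Real.log_exp]
  rw [heq]
  have hsum : HasDerivAt (fun t => ∑ m, Real.exp (g m t)) (∑ m, Real.exp (g m t₀) * g' m) t₀ :=
    HasDerivAt.fun_sum (fun m _ => (hg m).exp)
  exact (hg i).sub (hsum.log (hpos t₀).ne')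

/-- number coefficient `c` for row `i'` and subset `S` -/
noncomputable def coefc {C : ℕ} (i i' : Fin C) (S : Finset (Fin C)) : ℝ :=
  2 * (if i' = i then (1:ℝ) else 0) + (if i ∈ S then 1 else 0)

lemma rhardGrad_formula {C : ℕ} (k : ℕ) (i j : Fin C) (F : Fin C → Fin C → ℝ) :
    RhardGrad k i j F =
      ∑ i' : Fin C, ∑ S ∈ Finset.univ.filter (fun S : Finset (Fin C) => S.card = k ∧ i' ∉ S),
        (coefc i i' S * Real.exp (2 * F i' j + ∑ ℓ ∈ S, F ℓ j) /
            (∑ m, Real.exp (2 * F i' m + ∑ ℓ ∈ S, F ℓ m))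
          - (if i' = j then coefc i i' S else 0)) := by
  classical
  set t₀ := F i j with ht₀
  -- entry functions
  have hentry : ∀ a b : Fin C, HasDerivAt (fun t : ℝ => if a = i ∧ b = j then t else F a b)
      (if a = i ∧ b = j then (1:ℝ) else 0) t₀ := by
    intro a b
    by_cases h : a = i ∧ b = j
    · simpa [h] using (hasDerivAt_id' t₀)
    · simpa [h] using (hasDerivAt_const t₀ (F a b))
  have hFeq : ∀ a b : Fin C, (if a = i ∧ b = j then t₀ else F a b) = F a b := by
    intro a b
    split_ifs with h
    · rw [ht₀, h.1, h.2]
    · rfl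
  -- the z-coefficient
  set zc : Fin C → Finset (Fin C) → Fin C → ℝ :=
    fun i' S b => 2 * (if i' = i ∧ b = j then (1:ℝ) else 0)
      + ∑ ℓ ∈ S, (if ℓ = i ∧ b = j then (1:ℝ) else 0) with hzc
  have hz : ∀ (i' : Fin C) (S : Finset (Fin C)) (b : Fin C),
      HasDerivAt (fun t : ℝ => 2 * (if i' = i ∧ b = j then t else F i' b)
        + ∑ ℓ ∈ S, (if ℓ = i ∧ b = j then t else F ℓ b)) (zc i' S b) t₀ := by
    intro i' S b
    exact ((hentry i' b).const_mul 2).add (HasDerivAt.fun_sum (fun ℓ _ => hentry ℓ b))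
  -- zc simplification
  have hzc_eq : ∀ (i' : Fin C) (S : Finset (Fin C)) (b : Fin C),
      zc i' S b = if b = j then coefc i i' S else 0 := by
    intro i' S b
    by_cases hb : b = j
    · subst hb
      simp only [hzc, coefc, and_true]
      congr 1
      rw [Finset.sum_ite_eq' S i (fun _ => (1:ℝ))]
    · simp [hzc, hb]
  -- the big derivative
  have hbig : HasDerivAt (fun t : ℝ => Rhard k (fun a b => if a = i ∧ b = j then t else F a b))
      (-∑ i' : Fin C, ∑ S ∈ Finset.univ.filter (fun S : Finset (Fin C) => S.card = k ∧ i' ∉ S),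
        (zc i' S i' - (∑ m, Real.exp (2 * F i' m + ∑ ℓ ∈ S, F ℓ m) * zc i' S m)
          / (∑ m, Real.exp (2 * F i' m + ∑ ℓ ∈ S, F ℓ m)))) t₀ := by
    have : ∀ (i' : Fin C), ∀ S ∈ Finset.univ.filter
        (fun S : Finset (Fin C) => S.card = k ∧ i' ∉ S),
        HasDerivAt (fun t : ℝ => Real.log (softmax
          (fun b => 2 * (if i' = i ∧ b = j then t else F i' b)
            + ∑ ℓ ∈ S, (if ℓ = i ∧ b = j then t else F ℓ b)) i'))
          (zc i' S i' - (∑ m, Real.exp (2 * F i' m + ∑ ℓ ∈ S, F ℓ m) * zc i' S m)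
            / (∑ m, Real.exp (2 * F i' m + ∑ ℓ ∈ S, F ℓ m))) t₀ := by
      intro i' S _
      have := hasDerivAt_logsoftmax
        (g := fun b t => 2 * (if i' = i ∧ b = j then t else F i' b)
          + ∑ ℓ ∈ S, (if ℓ = i ∧ b = j then t else F ℓ b))
        (g' := fun b => zc i' S b) t₀ (fun b => hz i' S b) i'
      simpa only [hFeq] using this
    have h2 := (HasDerivAt.fun_sum (fun i' (_ : i' ∈ Finset.univ) =>
      HasDerivAt.fun_sum (this i'))).neg
    exact h2
  rw [RhardGrad, hbig.deriv]
  rw [← Finset.sum_neg_distrib]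
  apply Finset.sum_congr rfl
  intro i' _
  rw [← Finset.sum_neg_distrib]
  apply Finset.sum_congr rfl
  intro S hS
  rw [neg_sub]
  congr 1
  · -- (∑ m, exp * zc)/Σ = coefc * exp(z j) / Σ
    congr 1
    have : ∀ m : Fin C, Real.exp (2 * F i' m + ∑ ℓ ∈ S, F ℓ m) * zc i' S m
        = if m = j then coefc i i' S * Real.exp (2 * F i' j + ∑ ℓ ∈ S, F ℓ j) else 0 := by
      intro m
      rw [hzc_eq]
      by_cases hm : m = j
      · subst hm; simp [mul_comm]
      · simp [hm]
    rw [Finset.sum_congr rfl (fun m _ => this m), Finset.sum_ite_eq' Finset.univ j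
      (fun _ => coefc i i' S * Real.exp (2 * F i' j + ∑ ℓ ∈ S, F ℓ j))]
    simp
  · rw [hzc_eq]


lemma count_subsets {C : ℕ} (k : ℕ) (A B : Finset (Fin C)) (hAB : A ⊆ B) :
    ((Finset.univ.filter (fun S : Finset (Fin C) => S.card = k ∧ A ⊆ S ∧ S ⊆ B)).card)
      = if A.card ≤ k then (B.card - A.card).choose (k - A.card) else 0 := by
  split_ifs with hA
  · have hBA : (B \ A).card = B.card - A.card := Finset.card_sdiff_of_subset hAB
    rw [← hBA, ← Finset.card_powersetCard (k - A.card) (B \ A)]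
    apply Finset.card_bij' (fun S _ => S \ A) (fun T _ => T ∪ A)
    · intro S hS
      simp only [mem_filter, mem_univ, true_and] at hS
      rw [Finset.mem_powersetCard]
      refine ⟨Finset.sdiff_subset_sdiff hS.2.2 le_rfl, ?_⟩
      rw [Finset.card_sdiff_of_subset hS.2.1, hS.1]
    · intro T hT
      rw [Finset.mem_powersetCard] at hT
      have hTA : Disjoint T A := Finset.disjoint_of_subset_left hT.1 Finset.sdiff_disjoint
      simp only [mem_filter, mem_univ, true_and]
      refine ⟨?_, Finset.subset_union_right, Finset.union_subset (hT.1.trans (Finset.sdiff_subset)) hAB⟩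
      rw [Finset.card_union_of_disjoint hTA, hT.2]
      omega
    · intro S hS
      simp only [mem_filter, mem_univ, true_and] at hS
      rw [Finset.sdiff_union_of_subset hS.2.1]
    · intro T hT
      rw [Finset.mem_powersetCard] at hT
      have hTA : Disjoint T A := Finset.disjoint_of_subset_left hT.1 Finset.sdiff_disjoint
      rw [Finset.union_sdiff_cancel_right hTA]
  · rw [Finset.card_eq_zero, Finset.filter_eq_empty_iff]
    intro S _
    rintro ⟨h1, h2, -⟩
    exact hA (h1 ▸ Finset.card_le_card h2)


section
variable {C k : ℕ}

noncomputable def symF (C : ℕ) (x y : ℝ) : Fin C → Fin C → ℝ := fun a b => if a = b then x else y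

noncomputable def uu (k : ℕ) (x y : ℝ) : ℝ := 2*x + k*y
noncomputable def vv (k : ℕ) (x y : ℝ) : ℝ := x + ((k:ℝ)+1)*y
noncomputable def ww (k : ℕ) (x y : ℝ) : ℝ := ((k:ℝ)+2)*y
noncomputable def Sg (C k : ℕ) (x y : ℝ) : ℝ :=
  Real.exp (uu k x y) + k * Real.exp (vv k x y) + ((C - 1 - k : ℕ) : ℝ) * Real.exp (ww k x y)

lemma z_eq (hk : 1 ≤ k) (x y : ℝ) (i' : Fin C) (S : Finset (Fin C))
    (hcard : S.card = k) (hi' : i' ∉ S) (m : Fin C) :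
    2 * symF C x y i' m + ∑ ℓ ∈ S, symF C x y ℓ m
      = if m = i' then uu k x y else if m ∈ S then vv k x y else ww k x y := by
  have hsum : (∑ ℓ ∈ S, symF C x y ℓ m) = if m ∈ S then x + ((k:ℝ)-1)*y else (k:ℝ)*y := by
    by_cases hm : m ∈ S
    · rw [if_pos hm, ← Finset.add_sum_erase S _ hm]
      have h1 : symF C x y m m = x := by simp [symF]
      have h2 : (∑ ℓ ∈ S.erase m, symF C x y ℓ m) = ((k:ℝ)-1)*y := by
        have hc : ∀ ℓ ∈ S.erase m, symF C x y ℓ m = y := by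
          intro ℓ hℓ
          simp only [symF, if_neg (Finset.ne_of_mem_erase hℓ)]
        rw [Finset.sum_congr rfl hc, Finset.sum_const, Finset.card_erase_of_mem hm,
          hcard, nsmul_eq_mul]
        have : ((k - 1 : ℕ) : ℝ) = (k:ℝ) - 1 := by
          have := Nat.cast_sub hk (R := ℝ); simpa using this
        rw [this]
      rw [h1, h2]
    · have hc : ∀ ℓ ∈ S, symF C x y ℓ m = y := by
        intro ℓ hℓ
        simp only [symF, if_neg (fun h : ℓ = m => hm (h ▸ hℓ))]
      rw [if_neg hm, Finset.sum_congr rfl hc, Finset.sum_const, hcard, nsmul_eq_mul]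
  rw [hsum]
  by_cases hmi : m = i'
  · subst hmi
    rw [if_pos rfl, if_neg hi']
    have : symF C x y m m = x := by simp [symF]
    rw [this, uu]
  · rw [if_neg hmi]
    have h2 : symF C x y i' m = y := by
      simp only [symF, if_neg (fun h : i' = m => hmi (h ▸ rfl))]
    by_cases hmS : m ∈ S
    · rw [if_pos hmS, if_pos hmS, h2, vv]; ring
    · rw [if_neg hmS, if_neg hmS, h2, ww]; ring

lemma sum_exp_z (hk : 1 ≤ k) (hkC : k + 1 ≤ C) (x y : ℝ) (i' : Fin C) (S : Finset (Fin C))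
    (hcard : S.card = k) (hi' : i' ∉ S) :
    (∑ m, Real.exp (2 * symF C x y i' m + ∑ ℓ ∈ S, symF C x y ℓ m)) = Sg C k x y := by
  rw [Finset.sum_congr rfl (fun m _ => by rw [z_eq hk x y i' S hcard hi' m])]
  rw [← Finset.add_sum_erase Finset.univ _ (Finset.mem_univ i')]
  have h1 : Real.exp (if i' = i' then uu k x y else if i' ∈ S then vv k x y else ww k x y)
      = Real.exp (uu k x y) := by rw [if_pos rfl]
  have h2 : (∑ m ∈ Finset.univ.erase i',
      Real.exp (if m = i' then uu k x y else if m ∈ S then vv k x y else ww k x y))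
      = (k:ℝ) * Real.exp (vv k x y) + ((C - 1 - k : ℕ):ℝ) * Real.exp (ww k x y) := by
    have hc : ∀ m ∈ Finset.univ.erase i',
        Real.exp (if m = i' then uu k x y else if m ∈ S then vv k x y else ww k x y)
        = Real.exp (if m ∈ S then vv k x y else ww k x y) := by
      intro m hm
      rw [if_neg (Finset.ne_of_mem_erase hm)]
    rw [Finset.sum_congr rfl hc,
      ← Finset.sum_filter_add_sum_filter_not (Finset.univ.erase i') (fun m => m ∈ S)]
    have hfil : (Finset.univ.erase i').filter (fun m => m ∈ S) = S := by
      ext m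
      simp only [Finset.mem_filter, Finset.mem_erase, Finset.mem_univ, true_and, and_true]
      exact ⟨fun h => h.2, fun h => ⟨fun he => hi' (he ▸ h), h⟩⟩
    have hcard2 : ((Finset.univ.erase i').filter (fun m => ¬ m ∈ S)).card = C - 1 - k := by
      have := Finset.card_filter_add_card_filter_not
        (s := Finset.univ.erase i') (p := fun m => m ∈ S)
      rw [hfil, hcard] at this
      rw [Finset.card_erase_of_mem (Finset.mem_univ i'), Finset.card_univ,
        Fintype.card_fin] at this
      omega
    have hs1 : ∀ m ∈ (Finset.univ.erase i').filter (fun m => m ∈ S),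
        Real.exp (if m ∈ S then vv k x y else ww k x y) = Real.exp (vv k x y) := by
      intro m hm
      rw [if_pos (Finset.mem_filter.mp hm).2]
    have hs2 : ∀ m ∈ (Finset.univ.erase i').filter (fun m => ¬ m ∈ S),
        Real.exp (if m ∈ S then vv k x y else ww k x y) = Real.exp (ww k x y) := by
      intro m hm
      rw [if_neg (Finset.mem_filter.mp hm).2]
    rw [Finset.sum_congr rfl hs1, Finset.sum_congr rfl hs2, Finset.sum_const, Finset.sum_const,
      hfil, hcard, hcard2, nsmul_eq_mul, nsmul_eq_mul]
  rw [h1, h2, Sg]; ring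
end


section
variable {C k : ℕ}

lemma cntN1 (hk : 1 ≤ k) (hkC : k + 1 ≤ C) (i : Fin C) :
    (Finset.univ.filter (fun S : Finset (Fin C) => S.card = k ∧ i ∉ S)).card
      = (C-1).choose k := by
  have : Finset.univ.filter (fun S : Finset (Fin C) => S.card = k ∧ i ∉ S)
      = Finset.univ.filter (fun S : Finset (Fin C) =>
          S.card = k ∧ (∅ : Finset (Fin C)) ⊆ S ∧ S ⊆ Finset.univ.erase i) := by
    apply Finset.filter_congr
    intro S _
    simp [Finset.subset_erase]
  rw [this, count_subsets k ∅ (Finset.univ.erase i) (Finset.empty_subset _)]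
  simp [Finset.card_erase_of_mem, Finset.card_univ]

lemma cntM1 (hk : 1 ≤ k) (hkC : k + 1 ≤ C) (i i' : Fin C) (hne : i' ≠ i) :
    ((Finset.univ.filter (fun S : Finset (Fin C) => S.card = k ∧ i' ∉ S)).filter
        (fun S => i ∈ S)).card = (C-2).choose (k-1) := by
  rw [Finset.filter_filter]
  have : Finset.univ.filter (fun S : Finset (Fin C) => (S.card = k ∧ i' ∉ S) ∧ i ∈ S)
      = Finset.univ.filter (fun S : Finset (Fin C) =>
          S.card = k ∧ ({i} : Finset (Fin C)) ⊆ S ∧ S ⊆ Finset.univ.erase i') := by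
    apply Finset.filter_congr
    intro S _
    simp only [Finset.subset_erase, Finset.singleton_subset_iff, Finset.subset_univ, true_and]
    tauto
  rw [this, count_subsets k {i} (Finset.univ.erase i')
    (by simp [Finset.mem_erase, hne.symm])]
  simp only [Finset.card_singleton, if_pos hk,
    Finset.card_erase_of_mem (Finset.mem_univ i'), Finset.card_univ, Fintype.card_fin, hk, if_true]
  congr 1


lemma grad_diag (hk : 1 ≤ k) (hkC : k + 1 ≤ C) (i : Fin C) (x y : ℝ) :
    RhardGrad k i i (symF C x y) =
      -(((C-1).choose k : ℕ) : ℝ) * ((k:ℝ) * Real.exp (vv k x y)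
        + 2*((C-1-k:ℕ):ℝ) * Real.exp (ww k x y)) / Sg C k x y := by
  have hSgpos : 0 < Sg C k x y := by
    have h1 : (0:ℝ) ≤ (k:ℝ) * Real.exp (vv k x y) :=
      mul_nonneg (Nat.cast_nonneg k) (Real.exp_pos _).le
    have h2 : (0:ℝ) ≤ ((C-1-k:ℕ):ℝ) * Real.exp (ww k x y) :=
      mul_nonneg (Nat.cast_nonneg _) (Real.exp_pos _).le
    have h0 := Real.exp_pos (uu k x y)
    rw [Sg]; linarith
  rw [rhardGrad_formula]
  rw [← Finset.add_sum_erase Finset.univ _ (Finset.mem_univ i)]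
  have hterm1 : (∑ S ∈ Finset.univ.filter (fun S : Finset (Fin C) => S.card = k ∧ i ∉ S),
      (coefc i i S * Real.exp (2 * symF C x y i i + ∑ ℓ ∈ S, symF C x y ℓ i) /
          (∑ m, Real.exp (2 * symF C x y i m + ∑ ℓ ∈ S, symF C x y ℓ m))
        - (if i = i then coefc i i S else 0)))
      = (((C-1).choose k : ℕ) : ℝ) * (2 * Real.exp (uu k x y) / Sg C k x y - 2) := by
    have hc : ∀ S ∈ Finset.univ.filter (fun S : Finset (Fin C) => S.card = k ∧ i ∉ S),
        (coefc i i S * Real.exp (2 * symF C x y i i + ∑ ℓ ∈ S, symF C x y ℓ i) /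
          (∑ m, Real.exp (2 * symF C x y i m + ∑ ℓ ∈ S, symF C x y ℓ m))
        - (if i = i then coefc i i S else 0))
        = 2 * Real.exp (uu k x y) / Sg C k x y - 2 := by
      intro S hS
      rw [Finset.mem_filter] at hS
      have hco : coefc i i S = 2 := by
        simp [coefc, hS.2.2]
      rw [hco, sum_exp_z hk hkC x y i S hS.2.1 hS.2.2,
        z_eq hk x y i S hS.2.1 hS.2.2 i, if_pos rfl, if_pos rfl]
    rw [Finset.sum_congr rfl hc, Finset.sum_const, cntN1 hk hkC i, nsmul_eq_mul]
  have hterm2 : ∀ i' ∈ Finset.univ.erase i,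
      (∑ S ∈ Finset.univ.filter (fun S : Finset (Fin C) => S.card = k ∧ i' ∉ S),
        (coefc i i' S * Real.exp (2 * symF C x y i' i + ∑ ℓ ∈ S, symF C x y ℓ i) /
            (∑ m, Real.exp (2 * symF C x y i' m + ∑ ℓ ∈ S, symF C x y ℓ m))
          - (if i' = i then coefc i i' S else 0)))
      = (((C-2).choose (k-1) : ℕ) : ℝ) * (Real.exp (vv k x y) / Sg C k x y) := by
    intro i' hi'
    have hne : i' ≠ i := Finset.ne_of_mem_erase hi'
    have hc : ∀ S ∈ Finset.univ.filter (fun S : Finset (Fin C) => S.card = k ∧ i' ∉ S),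
        (coefc i i' S * Real.exp (2 * symF C x y i' i + ∑ ℓ ∈ S, symF C x y ℓ i) /
            (∑ m, Real.exp (2 * symF C x y i' m + ∑ ℓ ∈ S, symF C x y ℓ m))
          - (if i' = i then coefc i i' S else 0))
        = (if i ∈ S then Real.exp (vv k x y) / Sg C k x y else 0) := by
      intro S hS
      rw [Finset.mem_filter] at hS
      rw [sum_exp_z hk hkC x y i' S hS.2.1 hS.2.2,
        z_eq hk x y i' S hS.2.1 hS.2.2 i, if_neg hne.symm, if_neg hne]
      by_cases hiS : i ∈ S
      · rw [if_pos hiS, if_pos hiS]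
        have hco : coefc i i' S = 1 := by simp [coefc, hne, hiS]
        rw [hco]; ring
      · rw [if_neg hiS, if_neg hiS]
        have hco : coefc i i' S = 0 := by simp [coefc, hne, hiS]
        rw [hco]; ring
    rw [Finset.sum_congr rfl hc, ← Finset.sum_filter, Finset.sum_const,
      cntM1 hk hkC i i' hne, nsmul_eq_mul]
  rw [hterm1, Finset.sum_congr rfl hterm2, Finset.sum_const,
    Finset.card_erase_of_mem (Finset.mem_univ i), Finset.card_univ, Fintype.card_fin,
    nsmul_eq_mul]
  have hid : (((C-1 : ℕ)):ℝ) * (((C-2).choose (k-1) : ℕ) : ℝ)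
      = (k:ℝ) * (((C-1).choose k : ℕ) : ℝ) := by
    have h1 := Nat.add_one_mul_choose_eq (C-2) (k-1)
    have e1 : C-2+1 = C-1 := by omega
    have e2 : k-1+1 = k := by omega
    rw [e1, e2] at h1
    exact_mod_cast by rw [h1]; ring
  have hSg : Sg C k x y = Real.exp (uu k x y) + (k:ℝ) * Real.exp (vv k x y)
      + ((C-1-k:ℕ):ℝ) * Real.exp (ww k x y) := rfl
  field_simp
  nlinarith [hid, hSg, Real.exp_pos (uu k x y), Real.exp_pos (vv k x y),
    Real.exp_pos (ww k x y), hSgpos]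
end


section
variable {C k : ℕ}

lemma cntM2 (hk : 1 ≤ k) (hkC : k + 1 ≤ C) (i j : Fin C) (hij : i ≠ j) :
    ((Finset.univ.filter (fun S : Finset (Fin C) => S.card = k ∧ i ∉ S)).filter
        (fun S => j ∉ S)).card = (C-2).choose k := by
  rw [Finset.filter_filter]
  have : Finset.univ.filter (fun S : Finset (Fin C) => (S.card = k ∧ i ∉ S) ∧ j ∉ S)
      = Finset.univ.filter (fun S : Finset (Fin C) =>
          S.card = k ∧ (∅ : Finset (Fin C)) ⊆ S ∧ S ⊆ (Finset.univ.erase i).erase j) := by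
    apply Finset.filter_congr
    intro S _
    simp only [Finset.subset_erase, Finset.empty_subset, Finset.subset_univ, true_and]
    tauto
  rw [this, count_subsets k ∅ _ (Finset.empty_subset _)]
  have hcB : ((Finset.univ.erase i).erase j).card = C - 2 := by
    rw [Finset.card_erase_of_mem (by simp [Finset.mem_erase, hij.symm]),
      Finset.card_erase_of_mem (Finset.mem_univ i), Finset.card_univ, Fintype.card_fin]
    omega
  simp [hcB]

lemma cnt5 (hk : 1 ≤ k) (hkC : k + 1 ≤ C) (i j i' : Fin C) (hij : i ≠ j)
    (h1 : i' ≠ i) (h2 : i' ≠ j) :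
    ((Finset.univ.filter (fun S : Finset (Fin C) => S.card = k ∧ i' ∉ S)).filter
        (fun S => i ∈ S ∧ j ∈ S)).card
      = if 2 ≤ k then (C-3).choose (k-2) else 0 := by
  rw [Finset.filter_filter]
  have : Finset.univ.filter (fun S : Finset (Fin C) => (S.card = k ∧ i' ∉ S) ∧ i ∈ S ∧ j ∈ S)
      = Finset.univ.filter (fun S : Finset (Fin C) =>
          S.card = k ∧ ({i, j} : Finset (Fin C)) ⊆ S ∧ S ⊆ Finset.univ.erase i') := by
    apply Finset.filter_congr
    intro S _
    simp only [Finset.subset_erase, Finset.insert_subset_iff, Finset.singleton_subset_iff,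
      Finset.subset_univ, true_and]
    tauto
  rw [this, count_subsets k {i, j} (Finset.univ.erase i')
    (by simp [Finset.insert_subset_iff, Finset.mem_erase, h1.symm, h2.symm])]
  have hA : ({i, j} : Finset (Fin C)).card = 2 := Finset.card_pair hij
  rw [hA, Finset.card_erase_of_mem (Finset.mem_univ i'), Finset.card_univ, Fintype.card_fin]
  have e : C - 1 - 2 = C - 3 := by omega
  rw [e]

lemma cnt6 (hk : 1 ≤ k) (hkC : k + 1 ≤ C) (i j i' : Fin C) (hij : i ≠ j)
    (h1 : i' ≠ i) (h2 : i' ≠ j) :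
    ((Finset.univ.filter (fun S : Finset (Fin C) => S.card = k ∧ i' ∉ S)).filter
        (fun S => i ∈ S ∧ j ∉ S)).card = (C-3).choose (k-1) := by
  rw [Finset.filter_filter]
  have : Finset.univ.filter (fun S : Finset (Fin C) => (S.card = k ∧ i' ∉ S) ∧ i ∈ S ∧ j ∉ S)
      = Finset.univ.filter (fun S : Finset (Fin C) =>
          S.card = k ∧ ({i} : Finset (Fin C)) ⊆ S ∧ S ⊆ (Finset.univ.erase i').erase j) := by
    apply Finset.filter_congr
    intro S _
    simp only [Finset.subset_erase, Finset.singleton_subset_iff, Finset.subset_univ, true_and]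
    tauto
  rw [this, count_subsets k {i} _ (by simp [Finset.mem_erase, h1.symm, hij])]
  have hcB : ((Finset.univ.erase i').erase j).card = C - 2 := by
    rw [Finset.card_erase_of_mem (by simp [Finset.mem_erase, h2.symm]),
      Finset.card_erase_of_mem (Finset.mem_univ i'), Finset.card_univ, Fintype.card_fin]
    omega
  rw [Finset.card_singleton, hcB, if_pos hk]
  have e : C - 2 - 1 = C - 3 := by omega
  rw [e]

lemma grad_off (hk : 1 ≤ k) (hkC : k + 1 ≤ C) (i j : Fin C) (hij : i ≠ j) (x y : ℝ) :
    RhardGrad k i j (symF C x y) =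
      ((((C-2).choose (k-1) : ℕ) : ℝ) * Real.exp (vv k x y)
        + 2*(((C-2).choose k : ℕ):ℝ) * Real.exp (ww k x y)) / Sg C k x y := by
  have hSgpos : 0 < Sg C k x y := by
    have h1 : (0:ℝ) ≤ (k:ℝ) * Real.exp (vv k x y) :=
      mul_nonneg (Nat.cast_nonneg k) (Real.exp_pos _).le
    have h2 : (0:ℝ) ≤ ((C-1-k:ℕ):ℝ) * Real.exp (ww k x y) :=
      mul_nonneg (Nat.cast_nonneg _) (Real.exp_pos _).le
    have h0 := Real.exp_pos (uu k x y)
    rw [Sg]; linarith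
  set ev := Real.exp (vv k x y) with hev
  set ew := Real.exp (ww k x y) with hew
  set eu := Real.exp (uu k x y) with heu
  rw [rhardGrad_formula]
  rw [← Finset.add_sum_erase Finset.univ _ (Finset.mem_univ i)]
  have hjmem : j ∈ Finset.univ.erase i := by simp [Finset.mem_erase, hij.symm]
  rw [← Finset.add_sum_erase (Finset.univ.erase i) _ hjmem]
  -- term i' = i
  have hterm1 : (∑ S ∈ Finset.univ.filter (fun S : Finset (Fin C) => S.card = k ∧ i ∉ S),
      (coefc i i S * Real.exp (2 * symF C x y i j + ∑ ℓ ∈ S, symF C x y ℓ j) /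
          (∑ m, Real.exp (2 * symF C x y i m + ∑ ℓ ∈ S, symF C x y ℓ m))
        - (if i = j then coefc i i S else 0)))
      = (((C-2).choose (k-1):ℕ):ℝ) * (2 * ev / Sg C k x y)
        + (((C-2).choose k:ℕ):ℝ) * (2 * ew / Sg C k x y) := by
    have hc : ∀ S ∈ Finset.univ.filter (fun S : Finset (Fin C) => S.card = k ∧ i ∉ S),
        (coefc i i S * Real.exp (2 * symF C x y i j + ∑ ℓ ∈ S, symF C x y ℓ j) /
          (∑ m, Real.exp (2 * symF C x y i m + ∑ ℓ ∈ S, symF C x y ℓ m))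
        - (if i = j then coefc i i S else 0))
        = (if j ∈ S then 2 * ev / Sg C k x y else 2 * ew / Sg C k x y) := by
      intro S hS
      rw [Finset.mem_filter] at hS
      have hco : coefc i i S = 2 := by simp [coefc, hS.2.2]
      rw [hco, sum_exp_z hk hkC x y i S hS.2.1 hS.2.2,
        z_eq hk x y i S hS.2.1 hS.2.2 j, if_neg hij.symm, if_neg hij]
      by_cases hjS : j ∈ S
      · rw [if_pos hjS, if_pos hjS]; ring
      · rw [if_neg hjS, if_neg hjS]; ring
    rw [Finset.sum_congr rfl hc,
      ← Finset.sum_filter_add_sum_filter_not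
        (Finset.univ.filter (fun S : Finset (Fin C) => S.card = k ∧ i ∉ S)) (fun S => j ∈ S)]
    have hs1 : ∀ S ∈ (Finset.univ.filter (fun S : Finset (Fin C) => S.card = k ∧ i ∉ S)).filter
        (fun S => j ∈ S), (if j ∈ S then 2 * ev / Sg C k x y else 2 * ew / Sg C k x y)
          = 2 * ev / Sg C k x y := fun S hS => if_pos (Finset.mem_filter.mp hS).2
    have hs2 : ∀ S ∈ (Finset.univ.filter (fun S : Finset (Fin C) => S.card = k ∧ i ∉ S)).filter
        (fun S => ¬ j ∈ S), (if j ∈ S then 2 * ev / Sg C k x y else 2 * ew / Sg C k x y)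
          = 2 * ew / Sg C k x y := fun S hS => if_neg (Finset.mem_filter.mp hS).2
    rw [Finset.sum_congr rfl hs1, Finset.sum_congr rfl hs2, Finset.sum_const, Finset.sum_const,
      cntM1 hk hkC j i hij, cntM2 hk hkC i j hij, nsmul_eq_mul, nsmul_eq_mul]
  -- term i' = j
  have hterm2 : (∑ S ∈ Finset.univ.filter (fun S : Finset (Fin C) => S.card = k ∧ j ∉ S),
      (coefc i j S * Real.exp (2 * symF C x y j j + ∑ ℓ ∈ S, symF C x y ℓ j) /
          (∑ m, Real.exp (2 * symF C x y j m + ∑ ℓ ∈ S, symF C x y ℓ m))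
        - (if j = j then coefc i j S else 0)))
      = (((C-2).choose (k-1):ℕ):ℝ) * (eu / Sg C k x y - 1) := by
    have hc : ∀ S ∈ Finset.univ.filter (fun S : Finset (Fin C) => S.card = k ∧ j ∉ S),
        (coefc i j S * Real.exp (2 * symF C x y j j + ∑ ℓ ∈ S, symF C x y ℓ j) /
          (∑ m, Real.exp (2 * symF C x y j m + ∑ ℓ ∈ S, symF C x y ℓ m))
        - (if j = j then coefc i j S else 0))
        = (if i ∈ S then eu / Sg C k x y - 1 else 0) := by
      intro S hS
      rw [Finset.mem_filter] at hS
      rw [sum_exp_z hk hkC x y j S hS.2.1 hS.2.2,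
        z_eq hk x y j S hS.2.1 hS.2.2 j, if_pos rfl, if_pos rfl]
      by_cases hiS : i ∈ S
      · have hco : coefc i j S = 1 := by simp [coefc, hij.symm, hiS]
        rw [hco, if_pos hiS]; ring
      · have hco : coefc i j S = 0 := by simp [coefc, hij.symm, hiS]
        rw [hco, if_neg hiS]; ring
    rw [Finset.sum_congr rfl hc, ← Finset.sum_filter, Finset.sum_const,
      cntM1 hk hkC i j hij.symm, nsmul_eq_mul]
  -- remaining terms
  have hterm3 : ∀ i' ∈ (Finset.univ.erase i).erase j,
      (∑ S ∈ Finset.univ.filter (fun S : Finset (Fin C) => S.card = k ∧ i' ∉ S),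
        (coefc i i' S * Real.exp (2 * symF C x y i' j + ∑ ℓ ∈ S, symF C x y ℓ j) /
            (∑ m, Real.exp (2 * symF C x y i' m + ∑ ℓ ∈ S, symF C x y ℓ m))
          - (if i' = j then coefc i i' S else 0)))
      = (((if 2 ≤ k then (C-3).choose (k-2) else 0 : ℕ)):ℝ) * (ev / Sg C k x y)
        + (((C-3).choose (k-1):ℕ):ℝ) * (ew / Sg C k x y) := by
    intro i' hi'
    have h2 : i' ≠ j := Finset.ne_of_mem_erase hi'
    have h1 : i' ≠ i := Finset.ne_of_mem_erase (Finset.mem_of_mem_erase hi')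
    have hc : ∀ S ∈ Finset.univ.filter (fun S : Finset (Fin C) => S.card = k ∧ i' ∉ S),
        (coefc i i' S * Real.exp (2 * symF C x y i' j + ∑ ℓ ∈ S, symF C x y ℓ j) /
            (∑ m, Real.exp (2 * symF C x y i' m + ∑ ℓ ∈ S, symF C x y ℓ m))
          - (if i' = j then coefc i i' S else 0))
        = ((if i ∈ S ∧ j ∈ S then ev / Sg C k x y else 0)
            + (if i ∈ S ∧ ¬ j ∈ S then ew / Sg C k x y else 0)) := by
      intro S hS
      rw [Finset.mem_filter] at hS
      rw [sum_exp_z hk hkC x y i' S hS.2.1 hS.2.2,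
        z_eq hk x y i' S hS.2.1 hS.2.2 j, if_neg (fun h : j = i' => h2 h.symm), if_neg h2]
      by_cases hiS : i ∈ S
      · have hco : coefc i i' S = 1 := by simp [coefc, h1, hiS]
        rw [hco]
        by_cases hjS : j ∈ S
        · rw [if_pos hjS, if_pos ⟨hiS, hjS⟩,
            if_neg (by simp [hjS] : ¬(i ∈ S ∧ ¬ j ∈ S))]; ring
        · rw [if_neg hjS, if_neg (by simp [hjS] : ¬(i ∈ S ∧ j ∈ S)),
            if_pos ⟨hiS, hjS⟩]; ring
      · have hco : coefc i i' S = 0 := by simp [coefc, h1, hiS]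
        rw [hco, if_neg (by simp [hiS] : ¬(i ∈ S ∧ j ∈ S)),
          if_neg (by simp [hiS] : ¬(i ∈ S ∧ ¬ j ∈ S))]
        ring
    rw [Finset.sum_congr rfl hc, Finset.sum_add_distrib,
      ← Finset.sum_filter, ← Finset.sum_filter, Finset.sum_const, Finset.sum_const,
      cnt5 hk hkC i j i' hij h1 h2, cnt6 hk hkC i j i' hij h1 h2, nsmul_eq_mul, nsmul_eq_mul]
  rw [hterm1, hterm2, Finset.sum_congr rfl hterm3, Finset.sum_const,
    Finset.card_erase_of_mem hjmem,
    Finset.card_erase_of_mem (Finset.mem_univ i), Finset.card_univ, Fintype.card_fin,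
    nsmul_eq_mul]
  -- algebra
  have hcast2 : ((C - 1 - 1 : ℕ) : ℝ) = (C : ℝ) - 2 := by
    rw [Nat.cast_sub (by omega : 1 ≤ C - 1), Nat.cast_sub (by omega : 1 ≤ C)]
    ring
  have hid2 : ((C:ℝ) - 2) * (((if 2 ≤ k then (C-3).choose (k-2) else 0 : ℕ)):ℝ)
      + (((C-2).choose (k-1):ℕ):ℝ) = (k:ℝ) * (((C-2).choose (k-1):ℕ):ℝ) := by
    by_cases h2k : 2 ≤ k
    · rw [if_pos h2k]
      have h := Nat.add_one_mul_choose_eq (C-3) (k-2)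
      have e1 : C-3+1 = C-2 := by omega
      have e2 : k-2+1 = k-1 := by omega
      rw [e1, e2] at h
      have hC2 : ((C - 2 : ℕ) : ℝ) = (C:ℝ) - 2 := by
        rw [Nat.cast_sub (by omega : 2 ≤ C)]; norm_num
      have hk1 : ((k - 1 : ℕ) : ℝ) = (k:ℝ) - 1 := by
        rw [Nat.cast_sub (by omega : 1 ≤ k)]; norm_num
      have hcastid : ((C:ℝ) - 2) * (((C-3).choose (k-2):ℕ):ℝ)
          = (((C-2).choose (k-1):ℕ):ℝ) * ((k:ℝ) - 1) := by
        rw [← hC2, ← hk1]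
        exact_mod_cast congrArg (Nat.cast (R := ℝ)) h
      linear_combination hcastid
    · rw [if_neg h2k]
      have hk1 : k = 1 := by omega
      rw [hk1]
      norm_num
  have hid3 : ((C:ℝ) - 2) * (((C-3).choose (k-1):ℕ):ℝ)
      = (((C-1-k:ℕ)):ℝ) * (((C-2).choose (k-1):ℕ):ℝ) := by
    by_cases hC3 : 3 ≤ C
    · have h := Nat.add_one_mul_choose_eq (C-3) (k-1)
      have e1 : C-3+1 = C-2 := by omega
      have e2 : k-1+1 = k := by omega
      rw [e1, e2] at h
      have h' := Nat.choose_succ_right_eq (C-2) (k-1)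
      have e2' : k - 1 + 1 = k := by omega
      rw [e2'] at h'
      have e3 : C - 2 - (k-1) = C - 1 - k := by omega
      rw [e3] at h'
      have : (C-2) * (C-3).choose (k-1) = (C-1-k) * (C-2).choose (k-1) := by
        rw [h, h', Nat.mul_comm]
      have hC2 : ((C - 2 : ℕ) : ℝ) = (C:ℝ) - 2 := by
        rw [Nat.cast_sub (by omega : 2 ≤ C)]; norm_num
      rw [← hC2]
      exact_mod_cast congrArg (Nat.cast (R := ℝ)) this
    · have hC2 : C = 2 := by omega
      have hk1 : k = 1 := by omega
      subst hC2; subst hk1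
      norm_num
  have hSg : Sg C k x y = eu + (k:ℝ) * ev + ((C-1-k:ℕ):ℝ) * ew := rfl
  rw [hcast2]
  have e4 : ((C:ℝ) - 2) * ((((if 2 ≤ k then (C-3).choose (k-2) else 0 : ℕ)):ℝ) * (ev / Sg C k x y)
        + (((C-3).choose (k-1):ℕ):ℝ) * (ew / Sg C k x y))
      = ((k:ℝ) * (((C-2).choose (k-1):ℕ):ℝ) - (((C-2).choose (k-1):ℕ):ℝ)) * (ev / Sg C k x y)
        + ((((C-1-k:ℕ)):ℝ) * (((C-2).choose (k-1):ℕ):ℝ)) * (ew / Sg C k x y) := by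
    linear_combination (ev / Sg C k x y) * hid2 + (ew / Sg C k x y) * hid3
  rw [e4, hSg]
  have hD : eu + (k:ℝ)*ev + ((C-1-k:ℕ):ℝ)*ew ≠ 0 := by rw [← hSg]; exact hSgpos.ne'
  field_simp
  have hinv : (ev * (k:ℝ) + ew * ((C-1-k:ℕ):ℝ) + eu) * (ev * (k:ℝ) + ew * ((C-1-k:ℕ):ℝ) + eu)⁻¹ = 1 :=
    mul_inv_cancel₀ (fun h => hD (by linarith))
  linear_combination (((C-2).choose (k-1) : ℕ) : ℝ) * hinv


section
variable {C k : ℕ}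

lemma nidA (hk : 1 ≤ k) (hkC : k + 1 ≤ C) :
    (C-1) * (C-2).choose (k-1) = k * (C-1).choose k := by
  have h1 := Nat.add_one_mul_choose_eq (C-2) (k-1)
  have e1 : C-2+1 = C-1 := by omega
  have e2 : k-1+1 = k := by omega
  rw [e1, e2] at h1
  rw [h1, Nat.mul_comm]

lemma nidB (hk : 1 ≤ k) (hkC : k + 1 ≤ C) :
    (C-1) * (C-2).choose k = (C-1-k) * (C-1).choose k := by
  have h1 := Nat.add_one_mul_choose_eq (C-2) k
  have e1 : C-2+1 = C-1 := by omega
  rw [e1] at h1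
  have h2 := Nat.choose_succ_right_eq (C-1) k
  rw [h1, h2, Nat.mul_comm]

noncomputable def gdv (C k : ℕ) (x y : ℝ) : ℝ :=
  -(((C-1).choose k : ℕ) : ℝ) * ((k:ℝ) * Real.exp (vv k x y)
    + 2*((C-1-k:ℕ):ℝ) * Real.exp (ww k x y)) / Sg C k x y

noncomputable def gov (C k : ℕ) (x y : ℝ) : ℝ :=
  ((((C-2).choose (k-1) : ℕ) : ℝ) * Real.exp (vv k x y)
    + 2*(((C-2).choose k : ℕ):ℝ) * Real.exp (ww k x y)) / Sg C k x y

lemma grad_diag' (hk : 1 ≤ k) (hkC : k + 1 ≤ C) (i : Fin C) (x y : ℝ) :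
    RhardGrad k i i (symF C x y) = gdv C k x y := grad_diag hk hkC i x y

lemma grad_off' (hk : 1 ≤ k) (hkC : k + 1 ≤ C) (i j : Fin C) (hij : i ≠ j) (x y : ℝ) :
    RhardGrad k i j (symF C x y) = gov C k x y := grad_off hk hkC i j hij x y

lemma Sg_pos (C k : ℕ) (x y : ℝ) : 0 < Sg C k x y := by
  have h1 : (0:ℝ) ≤ (k:ℝ) * Real.exp (vv k x y) :=
    mul_nonneg (Nat.cast_nonneg k) (Real.exp_pos _).le
  have h2 : (0:ℝ) ≤ ((C-1-k:ℕ):ℝ) * Real.exp (ww k x y) :=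
    mul_nonneg (Nat.cast_nonneg _) (Real.exp_pos _).le
  have h0 := Real.exp_pos (uu k x y)
  rw [Sg]; linarith

lemma gdv_nonpos (C k : ℕ) (x y : ℝ) : gdv C k x y ≤ 0 := by
  apply div_nonpos_of_nonpos_of_nonneg _ (Sg_pos C k x y).le
  rw [neg_mul]
  apply neg_nonpos_of_nonneg
  have h1 : (0:ℝ) ≤ (k:ℝ) * Real.exp (vv k x y) :=
    mul_nonneg (Nat.cast_nonneg k) (Real.exp_pos _).le
  positivity

lemma gov_nonneg (C k : ℕ) (x y : ℝ) : 0 ≤ gov C k x y := by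
  apply div_nonneg _ (Sg_pos C k x y).le
  positivity

lemma exp_facts {x y : ℝ} (k : ℕ) (hxy : y ≤ x) :
    Real.exp (vv k x y) = Real.exp (y - x) * Real.exp (uu k x y)
    ∧ Real.exp (ww k x y) = Real.exp (y - x) * (Real.exp (y - x) * Real.exp (uu k x y))
    ∧ Real.exp (y - x) ≤ 1 := by
  refine ⟨?_, ?_, Real.exp_le_one_iff.mpr (by linarith)⟩
  · rw [← Real.exp_add]; congr 1; rw [vv, uu]; ring
  · rw [← Real.exp_add, ← Real.exp_add]; congr 1; rw [ww, uu]; ring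

lemma Sg_le (hk : 1 ≤ k) (hkC : k + 1 ≤ C) {x y : ℝ} (hxy : y ≤ x) :
    Sg C k x y ≤ (C:ℝ) * Real.exp (uu k x y) := by
  obtain ⟨h1, h2, h3⟩ := exp_facts k hxy
  have hE := Real.exp_pos (y - x)
  have hu := Real.exp_pos (uu k x y)
  have hcast : 1 + (k:ℝ) + ((C-1-k:ℕ):ℝ) = (C:ℝ) := by
    have h : (1 : ℕ) + k + (C-1-k) = C := by omega
    exact_mod_cast congrArg (Nat.cast (R := ℝ)) h
  have hkn : (0:ℝ) ≤ (k:ℝ) := Nat.cast_nonneg k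
  have hcn : (0:ℝ) ≤ ((C-1-k:ℕ):ℝ) := Nat.cast_nonneg _
  have t1 : (k:ℝ) * (Real.exp (y-x) * Real.exp (uu k x y)) ≤ (k:ℝ) * Real.exp (uu k x y) :=
    mul_le_mul_of_nonneg_left (mul_le_of_le_one_left hu.le h3) hkn
  have t2 : ((C-1-k:ℕ):ℝ) * (Real.exp (y-x) * (Real.exp (y-x) * Real.exp (uu k x y)))
      ≤ ((C-1-k:ℕ):ℝ) * Real.exp (uu k x y) :=
    mul_le_mul_of_nonneg_left (le_trans
      (mul_le_of_le_one_left (mul_pos hE hu).le h3)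
      (mul_le_of_le_one_left hu.le h3)) hcn
  have hexp : (C:ℝ) * Real.exp (uu k x y)
      = Real.exp (uu k x y) + (k:ℝ) * Real.exp (uu k x y)
        + ((C-1-k:ℕ):ℝ) * Real.exp (uu k x y) := by
    rw [← hcast]; ring
  rw [Sg, h1, h2, hexp]
  linarith

lemma Sg_ge (C k : ℕ) (x y : ℝ) : Real.exp (uu k x y) ≤ Sg C k x y := by
  have h1 : (0:ℝ) ≤ (k:ℝ) * Real.exp (vv k x y) :=
    mul_nonneg (Nat.cast_nonneg k) (Real.exp_pos _).le
  have h2 : (0:ℝ) ≤ ((C-1-k:ℕ):ℝ) * Real.exp (ww k x y) :=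
    mul_nonneg (Nat.cast_nonneg _) (Real.exp_pos _).le
  rw [Sg]; linarith

lemma neg_gdv_eq (C k : ℕ) (x y : ℝ) :
    -gdv C k x y = (((C-1).choose k : ℕ) : ℝ) * ((k:ℝ) * Real.exp (vv k x y)
      + 2*((C-1-k:ℕ):ℝ) * Real.exp (ww k x y)) / Sg C k x y := by
  rw [gdv]; ring

lemma b1 (hk : 1 ≤ k) (hkC : k + 1 ≤ C) {x y : ℝ} (hxy : y ≤ x) :
    (((C-1).choose k : ℕ):ℝ) * (k:ℝ) / (C:ℝ) * Real.exp (y - x) ≤ -gdv C k x y := by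
  obtain ⟨h1, h2, h3⟩ := exp_facts k hxy
  have hE := Real.exp_pos (y - x)
  have hu := Real.exp_pos (uu k x y)
  have hCpos : (0:ℝ) < C := by
    have h : 0 < C := by omega
    exact_mod_cast h
  rw [neg_gdv_eq]
  have key : (((C-1).choose k : ℕ):ℝ) * (k:ℝ) / (C:ℝ) * Real.exp (y - x)
      = ((((C-1).choose k : ℕ):ℝ) * ((k:ℝ) * Real.exp (vv k x y)))
        / ((C:ℝ) * Real.exp (uu k x y)) := by
    rw [h1]; field_simp
  rw [key]
  apply div_le_div₀
  · positivity
  · have h4 : (0:ℝ) ≤ (((C-1).choose k : ℕ):ℝ) := Nat.cast_nonneg _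
    have h6 : (0:ℝ) ≤ 2*((C-1-k:ℕ):ℝ) * Real.exp (ww k x y) := by positivity
    nlinarith [mul_nonneg h4 h6]
  · exact Sg_pos C k x y
  · exact Sg_le hk hkC hxy

lemma b2 (hk : 1 ≤ k) (hkC : k + 1 ≤ C) {x y : ℝ} (hxy : y ≤ x) :
    -gdv C k x y ≤ (((C-1).choose k : ℕ):ℝ) * ((k:ℝ) + 2*((C-1-k:ℕ):ℝ))
      * Real.exp (y - x) := by
  obtain ⟨h1, h2, h3⟩ := exp_facts k hxy
  have hE := Real.exp_pos (y - x)
  have hu := Real.exp_pos (uu k x y)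
  have h4 : (0:ℝ) ≤ (((C-1).choose k : ℕ):ℝ) := Nat.cast_nonneg _
  have hkn : (0:ℝ) ≤ (k:ℝ) := Nat.cast_nonneg k
  have hcn : (0:ℝ) ≤ ((C-1-k:ℕ):ℝ) := Nat.cast_nonneg _
  have hnum : (0:ℝ) ≤ (((C-1).choose k : ℕ):ℝ) * ((k:ℝ) * Real.exp (vv k x y)
      + 2*((C-1-k:ℕ):ℝ) * Real.exp (ww k x y)) := by positivity
  have hstep := div_le_div_of_nonneg_left hnum (Real.exp_pos (uu k x y)) (Sg_ge C k x y)
  rw [neg_gdv_eq]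
  refine le_trans hstep ?_
  have heq : (((C-1).choose k : ℕ):ℝ) * ((k:ℝ) * Real.exp (vv k x y)
      + 2*((C-1-k:ℕ):ℝ) * Real.exp (ww k x y)) / Real.exp (uu k x y)
      = (((C-1).choose k : ℕ):ℝ) * ((k:ℝ) * Real.exp (y - x)
        + 2*((C-1-k:ℕ):ℝ) * (Real.exp (y - x) * Real.exp (y - x))) := by
    rw [h1, h2]; field_simp
  rw [heq]
  nlinarith [mul_nonneg (mul_nonneg h4 hcn) (mul_nonneg hE.le (sub_nonneg.mpr h3))]

lemma b3 (hk : 1 ≤ k) (hkC : k + 1 ≤ C) {x y : ℝ} (hxy : y ≤ x) :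
    (((C-2).choose (k-1) : ℕ):ℝ) / (C:ℝ) * Real.exp (y - x) ≤ gov C k x y := by
  obtain ⟨h1, h2, h3⟩ := exp_facts k hxy
  have hE := Real.exp_pos (y - x)
  have hu := Real.exp_pos (uu k x y)
  have hCpos : (0:ℝ) < C := by
    have h : 0 < C := by omega
    exact_mod_cast h
  rw [gov]
  have key : (((C-2).choose (k-1) : ℕ):ℝ) / (C:ℝ) * Real.exp (y - x)
      = ((((C-2).choose (k-1) : ℕ):ℝ) * Real.exp (vv k x y))
        / ((C:ℝ) * Real.exp (uu k x y)) := by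
    rw [h1]; field_simp
  rw [key]
  apply div_le_div₀
  · positivity
  · have h6 : (0:ℝ) ≤ 2*(((C-2).choose k : ℕ):ℝ) * Real.exp (ww k x y) := by positivity
    linarith
  · exact Sg_pos C k x y
  · exact Sg_le hk hkC hxy

lemma b4 (hk : 1 ≤ k) (hkC : k + 1 ≤ C) {x y : ℝ} (hxy : y ≤ x) :
    gov C k x y ≤ -gdv C k x y := by
  rw [gov, neg_gdv_eq]
  rw [div_le_div_iff_of_pos_right (Sg_pos C k x y)]
  have hM1 : (((C-2).choose (k-1) : ℕ):ℝ) ≤ (k:ℝ) * (((C-1).choose k : ℕ):ℝ) := by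
    have h1 : (C-2).choose (k-1) ≤ k * (C-1).choose k := by
      calc (C-2).choose (k-1) = 1 * (C-2).choose (k-1) := (Nat.one_mul _).symm
        _ ≤ (C-1) * (C-2).choose (k-1) := Nat.mul_le_mul_right _ (by omega)
        _ = k * (C-1).choose k := nidA hk hkC
    exact_mod_cast h1
  have hM2 : (((C-2).choose k : ℕ):ℝ) ≤ ((C-1-k:ℕ):ℝ) * (((C-1).choose k : ℕ):ℝ) := by
    have h1 : (C-2).choose k ≤ (C-1-k) * (C-1).choose k := by
      calc (C-2).choose k = 1 * (C-2).choose k := (Nat.one_mul _).symm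
        _ ≤ (C-1) * (C-2).choose k := Nat.mul_le_mul_right _ (by omega)
        _ = (C-1-k) * (C-1).choose k := nidB hk hkC
    exact_mod_cast h1
  nlinarith [Real.exp_pos (vv k x y), Real.exp_pos (ww k x y)]

noncomputable def pseq (C k : ℕ) : ℕ → ℝ × ℝ
  | 0 => ((0:ℝ), (0:ℝ))
  | (m+1) => ((pseq C k m).1 - gdv C k (pseq C k m).1 (pseq C k m).2,
              (pseq C k m).2 - gov C k (pseq C k m).1 (pseq C k m).2)

end


lemma dyn (x y : ℕ → ℝ) (c1 c3 K : ℝ) (hc1 : 0 < c1) (hc3 : 0 < c3) (hK : 0 < K)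
    (hx0 : x 0 = 0) (hy0 : y 0 = 0)
    (h1 : ∀ m, c1 * Real.exp (y m - x m) ≤ x (m+1) - x m)
    (h2 : ∀ m, x (m+1) - x m ≤ K * Real.exp (y m - x m))
    (h3 : ∀ m, c3 * Real.exp (y m - x m) ≤ y m - y (m+1))
    (h4 : ∀ m, y m - y (m+1) ≤ x (m+1) - x m) :
    Tendsto x atTop atTop ∧ Tendsto y atTop atBot := by
  have hxmono : Monotone x := by
    apply monotone_nat_of_le_succ
    intro m
    have := h1 m
    have := (Real.exp_pos (y m - x m))
    nlinarith
  have hA : ∀ m, x m - y m ≤ 2 * x m := by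
    intro m
    induction m with
    | zero => rw [hx0, hy0]; norm_num
    | succ n ih =>
      have := h4 n
      linarith
  have hxunb : ¬ BddAbove (Set.range x) := by
    rintro ⟨B, hB⟩
    simp only [mem_upperBounds, Set.mem_range, forall_exists_index,
      forall_apply_eq_imp_iff] at hB
    set δ := c1 * Real.exp (-(2*B)) with hδ
    have hδpos : 0 < δ := mul_pos hc1 (Real.exp_pos _)
    have hstep : ∀ m, δ ≤ x (m+1) - x m := by
      intro m
      refine le_trans ?_ (h1 m)
      have hxB := hB m
      have h5 : -(2*B) ≤ y m - x m := by have := hA m; linarith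
      exact mul_le_mul_of_nonneg_left (Real.exp_le_exp.mpr h5) hc1.le
    have hlin : ∀ m : ℕ, (m : ℝ) * δ ≤ x m := by
      intro m
      induction m with
      | zero => simp [hx0]
      | succ n ih =>
        have := hstep n
        push_cast
        linarith
    obtain ⟨m, hm⟩ := exists_nat_gt (B / δ)
    have h6 := hlin m
    have h7 := hB m
    have h8 : B < (m:ℝ) * δ := by
      rw [div_lt_iff₀ hδpos] at hm
      linarith
    linarith
  have hxtop : Tendsto x atTop atTop := tendsto_atTop_atTop_of_monotone' hxmono hxunb
  set ρ := c3 / K with hρ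
  have hρpos : 0 < ρ := div_pos hc3 hK
  have hρK : ρ * K = c3 := div_mul_cancel₀ c3 hK.ne'
  have hC : ∀ m, y m ≤ -ρ * x m := by
    intro m
    induction m with
    | zero => rw [hx0, hy0]; norm_num
    | succ n ih =>
      have key : ρ * (K * Real.exp (y n - x n)) = c3 * Real.exp (y n - x n) := by
        rw [← mul_assoc, hρK]
      have h9 := mul_le_mul_of_nonneg_left (h2 n) hρpos.le
      have h10 := h3 n
      nlinarith
  refine ⟨hxtop, ?_⟩
  apply tendsto_atBot_mono hC
  have h12 := hxtop.const_mul_atTop hρpos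
  have h11 : Tendsto (fun m => -(ρ * x m)) atTop atBot := tendsto_neg_atBot_iff.mpr h12
  simpa [neg_mul] using h11

/-- There exist an initialization `F⁰` and step size `η > 0` such that fixed-step
gradient descent on the hard OKO risk sends every diagonal entry to `+∞` and every
off-diagonal entry to `−∞`. -/
theorem Rhard_gradient_descent_diverges {C k : ℕ} (hk : 1 ≤ k) (hkC : k + 1 ≤ C) :
    ∃ (F0 : Fin C → Fin C → ℝ) (η : ℝ), 0 < η ∧
      ∃ Fseq : ℕ → Fin C → Fin C → ℝ,
        Fseq 0 = F0
        ∧ (∀ m (i j : Fin C),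
            Fseq (m + 1) i j = Fseq m i j - η * RhardGrad k i j (Fseq m))
        ∧ (∀ i : Fin C, Tendsto (fun m => Fseq m i i) atTop atTop)
        ∧ (∀ i j : Fin C, i ≠ j → Tendsto (fun m => Fseq m i j) atTop atBot) := by
  classical
  set xs : ℕ → ℝ := fun m => (pseq C k m).1 with hxs
  set ys : ℕ → ℝ := fun m => (pseq C k m).2 with hys
  have hx0 : xs 0 = 0 := rfl
  have hy0 : ys 0 = 0 := rfl
  have hxsucc : ∀ m, xs (m+1) = xs m - gdv C k (xs m) (ys m) := fun m => rfl
  have hysucc : ∀ m, ys (m+1) = ys m - gov C k (xs m) (ys m) := fun m => rfl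
  have hsign : ∀ m, 0 ≤ xs m ∧ ys m ≤ 0 := by
    intro m
    induction m with
    | zero => rw [hx0, hy0]; norm_num
    | succ n ih =>
      constructor
      · rw [hxsucc n]
        have := gdv_nonpos C k (xs n) (ys n)
        linarith [ih.1]
      · rw [hysucc n]
        have := gov_nonneg C k (xs n) (ys n)
        linarith [ih.2]
  have hxy : ∀ m, ys m ≤ xs m := fun m => le_trans (hsign m).2 (hsign m).1
  -- constants
  have hN1pos : 0 < (C-1).choose k := Nat.choose_pos (by omega)
  have hM1pos : 0 < (C-2).choose (k-1) := Nat.choose_pos (by omega)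
  have hCpos : (0:ℝ) < C := by
    have h : 0 < C := by omega
    exact_mod_cast h
  have hN1r : (0:ℝ) < (((C-1).choose k : ℕ):ℝ) := by exact_mod_cast hN1pos
  have hM1r : (0:ℝ) < (((C-2).choose (k-1) : ℕ):ℝ) := by exact_mod_cast hM1pos
  have hkr : (0:ℝ) < (k:ℝ) := by
    have h : 0 < k := by omega
    exact_mod_cast h
  set c1 : ℝ := (((C-1).choose k : ℕ):ℝ) * (k:ℝ) / (C:ℝ) with hc1def
  set c3 : ℝ := (((C-2).choose (k-1) : ℕ):ℝ) / (C:ℝ) with hc3def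
  set K : ℝ := (((C-1).choose k : ℕ):ℝ) * ((k:ℝ) + 2*((C-1-k:ℕ):ℝ)) with hKdef
  have hc1 : 0 < c1 := by
    rw [hc1def]
    positivity
  have hc3 : 0 < c3 := by
    rw [hc3def]
    positivity
  have hKpos : 0 < K := by
    rw [hKdef]
    have : (0:ℝ) ≤ ((C-1-k:ℕ):ℝ) := Nat.cast_nonneg _
    nlinarith
  have hstep1 : ∀ m, c1 * Real.exp (ys m - xs m) ≤ xs (m+1) - xs m := by
    intro m
    have := b1 hk hkC (hxy m)
    rw [hxsucc m]
    rw [hc1def]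
    linarith [this]
  have hstep2 : ∀ m, xs (m+1) - xs m ≤ K * Real.exp (ys m - xs m) := by
    intro m
    have := b2 hk hkC (hxy m)
    rw [hxsucc m, hKdef]
    linarith [this]
  have hstep3 : ∀ m, c3 * Real.exp (ys m - xs m) ≤ ys m - ys (m+1) := by
    intro m
    have := b3 hk hkC (hxy m)
    rw [hysucc m, hc3def]
    linarith [this]
  have hstep4 : ∀ m, ys m - ys (m+1) ≤ xs (m+1) - xs m := by
    intro m
    have := b4 hk hkC (hxy m)
    rw [hysucc m, hxsucc m]
    linarith [this]
  obtain ⟨hxt, hyt⟩ := dyn xs ys c1 c3 K hc1 hc3 hKpos hx0 hy0 hstep1 hstep2 hstep3 hstep4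
  refine ⟨symF C 0 0, 1, one_pos, fun m => symF C (xs m) (ys m), rfl, ?_, ?_, ?_⟩
  · intro m i j
    by_cases hij : i = j
    · subst hij
      rw [grad_diag' hk hkC i (xs m) (ys m)]
      show symF C (xs (m+1)) (ys (m+1)) i i = symF C (xs m) (ys m) i i - 1 * gdv C k (xs m) (ys m)
      simp only [symF, if_pos rfl, one_mul]
      exact hxsucc m
    · rw [grad_off' hk hkC i j hij (xs m) (ys m)]
      show symF C (xs (m+1)) (ys (m+1)) i j = symF C (xs m) (ys m) i j - 1 * gov C k (xs m) (ys m)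
      simp only [symF, if_neg hij, one_mul]
      exact hysucc m
  · intro i
    simpa [symF] using hxt
  · intro i j hij
    simpa [symF, hij] using hyt
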